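/- Let a > 0, D₁ > 0, τ > 0, and let R_t be a random variable with density f_{r,t} (parameters r₀ > 0, D₂ > 0, t > 0). Let r* > a be the unique maximizer of ĥ(·,τ) on (a,∞) and h* = ĥ(r*,τ). For 0 < h < h*, let r₁(h) < r₂(h) denote the two solutions in (a,∞) of ĥ(r,τ) = h, and let ĥ'(r,τ) denote the partial derivative of ĥ with respect to r. Then for all 0 ≤ h_a < h_b < h*, the probability P( h_a < ĥ(R_t,τ) ≤ h_b ) = ∫_{h_a}^{h_b} [ f_{r,t}(r₁(h))/ĥ'(r₁(h),τ) − f_{r,t}(r₂(h))/ĥ'(r₂(h),τ) ] dh; i.e., on (0,h*) the law of ĥ(R_t,τ) has density h ↦ f_{r,t}(r₁(h))/ĥ'(r₁(h),τ) − f_{r,t}(r₂(h))/ĥ'(r₂(h),τ). -/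

import Mathlib

open MeasureTheory Real

/-- The channel impulse response at distance `r` and elapsed time `τ`. -/
noncomputable def hCIR (a D₁ τ r : ℝ) : ℝ :=
  a / Real.sqrt (4 * π * D₁ * τ ^ 3) * (1 - a / r) * Real.exp (-(r - a) ^ 2 / (4 * D₁ * τ))

/-- The partial derivative of the channel impulse response with respect to the distance. -/
noncomputable def hCIRderiv (a D₁ τ r : ℝ) : ℝ :=
  a / Real.sqrt (4 * π * D₁ * τ ^ 3) * Real.exp (-(r - a) ^ 2 / (4 * D₁ * τ))
    * (a / r ^ 2 - (r - a) / (2 * D₁ * τ) * (1 - a / r))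

/-- The density of the distance between transmitter and receiver at time `t`. -/
noncomputable def fdist (r₀ D₂ t x : ℝ) : ℝ :=
  if 0 < x then
    x / (r₀ * Real.sqrt (π * D₂ * t)) * Real.exp (-(x ^ 2 + r₀ ^ 2) / (4 * D₂ * t))
      * Real.sinh (r₀ * x / (2 * D₂ * t))
  else 0

lemma fdist_nonneg (r₀ D₂ t : ℝ) (hr₀ : 0 < r₀) (hD₂ : 0 < D₂) (ht : 0 < t) (x : ℝ) :
    0 ≤ fdist r₀ D₂ t x := by
  unfold fdist
  split_ifs with h
  · have hπ := Real.pi_pos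
    have hs : 0 < Real.sqrt (π * D₂ * t) := Real.sqrt_pos.mpr (by positivity)
    have hsh : 0 < Real.sinh (r₀ * x / (2 * D₂ * t)) :=
      Real.sinh_pos_iff.mpr (by positivity)
    positivity
  · exact le_refl 0

lemma fdist_measurable (r₀ D₂ t : ℝ) : Measurable (fdist r₀ D₂ t) := by
  unfold fdist
  refine Measurable.ite measurableSet_Ioi ?_ measurable_const
  fun_prop

lemma hCIR_measurable (a D₁ τ : ℝ) : Measurable (hCIR a D₁ τ) := by
  unfold hCIR
  fun_prop

lemma hCIR_pos (a D₁ τ : ℝ) (ha : 0 < a) (hD₁ : 0 < D₁) (hτ : 0 < τ) {x : ℝ} (hx : a < x) :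
    0 < hCIR a D₁ τ x := by
  have hπ := Real.pi_pos
  have hs : 0 < Real.sqrt (4 * π * D₁ * τ ^ 3) := Real.sqrt_pos.mpr (by positivity)
  have h1 : 0 < 1 - a / x := by
    rw [sub_pos]
    exact (div_lt_one (ha.trans hx)).mpr hx
  unfold hCIR
  positivity

lemma hCIR_nonpos (a D₁ τ : ℝ) (ha : 0 < a) {x : ℝ} (hx : 0 < x) (hxa : x ≤ a) :
    hCIR a D₁ τ x ≤ 0 := by
  have h1 : 1 - a / x ≤ 0 := by
    rw [sub_nonpos]
    exact (one_le_div hx).mpr hxa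
  have hC : 0 ≤ a / Real.sqrt (4 * π * D₁ * τ ^ 3) :=
    div_nonneg ha.le (Real.sqrt_nonneg _)
  unfold hCIR
  exact mul_nonpos_of_nonpos_of_nonneg (mul_nonpos_of_nonneg_of_nonpos hC h1)
    (Real.exp_pos _).le
lemma hCIR_hasDerivAt (a D₁ τ : ℝ) (hD₁ : 0 < D₁) (hτ : 0 < τ) {x : ℝ} (hx : x ≠ 0) :
    HasDerivAt (hCIR a D₁ τ) (hCIRderiv a D₁ τ x) x := by
  set C := a / Real.sqrt (4 * π * D₁ * τ ^ 3) with hC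
  have h1 : HasDerivAt (fun r : ℝ => 1 - a / r) (a / x ^ 2) x := by
    have := ((hasDerivAt_inv hx).const_mul a).const_sub 1
    refine this.congr_deriv ?_
    field_simp
  have h2 : HasDerivAt (fun r : ℝ => -(r - a) ^ 2 / (4 * D₁ * τ))
      (-(2 * (x - a)) / (4 * D₁ * τ)) x := by
    have := (((hasDerivAt_id x).sub_const a).pow 2).neg.div_const (4 * D₁ * τ)
    refine this.congr_deriv ?_
    simp [id]
  have h3 := h2.exp
  have h4 := (h1.const_mul C).mul h3
  refine h4.congr_deriv ?_
  unfold hCIRderiv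
  rw [← hC]
  have : (4 : ℝ) * D₁ * τ ≠ 0 := by positivity
  field_simp
  ring
lemma gfun_strictAnti (a D₁ τ : ℝ) (ha : 0 < a) (hD₁ : 0 < D₁) (hτ : 0 < τ) :
    StrictAntiOn (fun r : ℝ => a / r ^ 2 - (r - a) / (2 * D₁ * τ) * (1 - a / r))
      (Set.Ioi a) := by
  intro x hx y hy hxy
  simp only [Set.mem_Ioi] at hx hy
  have hx0 : 0 < x := ha.trans hx
  have hy0 : 0 < y := ha.trans hy
  have h1 : a / y ^ 2 < a / x ^ 2 :=
    div_lt_div_of_pos_left ha (by positivity) (by nlinarith)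
  have h2 : (x - a) / (2 * D₁ * τ) * (1 - a / x) < (y - a) / (2 * D₁ * τ) * (1 - a / y) := by
    rw [show (1:ℝ) - a / x = (x - a) / x by field_simp,
        show (1:ℝ) - a / y = (y - a) / y by field_simp,
        div_mul_div_comm, div_mul_div_comm,
        div_lt_div_iff₀ (by positivity) (by positivity)]
    nlinarith [mul_pos (mul_pos hD₁ hτ)
      (mul_pos (sub_pos.mpr hxy) (show (0:ℝ) < x * y - a ^ 2 by nlinarith))]
  exact sub_lt_sub h1 h2

lemma Cexp_pos (a D₁ τ : ℝ) (ha : 0 < a) (hD₁ : 0 < D₁) (hτ : 0 < τ) (r : ℝ) :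
    0 < a / Real.sqrt (4 * π * D₁ * τ ^ 3) * Real.exp (-(r - a) ^ 2 / (4 * D₁ * τ)) := by
  have hπ := Real.pi_pos
  have : (0:ℝ) < Real.sqrt (4 * π * D₁ * τ ^ 3) := Real.sqrt_pos.mpr (by positivity)
  positivity

lemma hCIRderiv_sign (a D₁ τ rstar : ℝ) (ha : 0 < a) (hD₁ : 0 < D₁) (hτ : 0 < τ)
    (hrstar : a < rstar) (h0 : hCIRderiv a D₁ τ rstar = 0) :
    (∀ x ∈ Set.Ioo a rstar, 0 < hCIRderiv a D₁ τ x) ∧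
      (∀ x ∈ Set.Ioi rstar, hCIRderiv a D₁ τ x < 0) := by
  have hganti := gfun_strictAnti a D₁ τ ha hD₁ hτ
  have hg0 : a / rstar ^ 2 - (rstar - a) / (2 * D₁ * τ) * (1 - a / rstar) = 0 := by
    have hCe := Cexp_pos a D₁ τ ha hD₁ hτ rstar
    have h' : a / Real.sqrt (4 * π * D₁ * τ ^ 3) * Real.exp (-(rstar - a) ^ 2 / (4 * D₁ * τ))
        * (a / rstar ^ 2 - (rstar - a) / (2 * D₁ * τ) * (1 - a / rstar)) = 0 := h0
    rcases mul_eq_zero.mp h' with h | h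
    · exact absurd h (ne_of_gt hCe)
    · exact h
  constructor
  · intro x hx
    have h' := hganti (Set.mem_Ioi.mpr hx.1) (Set.mem_Ioi.mpr hrstar) hx.2
    simp only at h'
    exact mul_pos (Cexp_pos a D₁ τ ha hD₁ hτ x) (by linarith)
  · intro x hx
    have h' := hganti (Set.mem_Ioi.mpr hrstar) (Set.mem_Ioi.mpr (hrstar.trans hx)) hx
    simp only at h'
    exact mul_neg_of_pos_of_neg (Cexp_pos a D₁ τ ha hD₁ hτ x) (by linarith)
/-- PDF of the time-variant channel impulse response `ĥ(R_t, τ)` on `(0, h*)`. -/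
theorem CIR_pdf {Ω : Type*} [MeasurableSpace Ω] (P : Measure Ω) [IsProbabilityMeasure P]
    (a D₁ D₂ τ t r₀ : ℝ) (ha : 0 < a) (hD₁ : 0 < D₁) (hD₂ : 0 < D₂)
    (hτ : 0 < τ) (ht : 0 < t) (hr₀ : 0 < r₀)
    (R : Ω → ℝ) (hRmeas : Measurable R)
    (hRlaw : P.map R = volume.withDensity (fun x => ENNReal.ofReal (fdist r₀ D₂ t x)))
    (rstar : ℝ) (hrstar : a < rstar)
    (hmono : StrictMonoOn (hCIR a D₁ τ) (Set.Ioc a rstar))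
    (hanti : StrictAntiOn (hCIR a D₁ τ) (Set.Ici rstar))
    (hmax : ∀ r ∈ Set.Ioi a, r ≠ rstar → hCIR a D₁ τ r < hCIR a D₁ τ rstar)
    (r₁ r₂ : ℝ → ℝ)
    (hroots : ∀ h ∈ Set.Ioo (0:ℝ) (hCIR a D₁ τ rstar),
      a < r₁ h ∧ r₁ h < r₂ h ∧ hCIR a D₁ τ (r₁ h) = h ∧ hCIR a D₁ τ (r₂ h) = h) :
    ∀ ha' hb : ℝ, 0 ≤ ha' → ha' < hb → hb < hCIR a D₁ τ rstar →
      (P {ω | ha' < hCIR a D₁ τ (R ω) ∧ hCIR a D₁ τ (R ω) ≤ hb}).toReal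
        = ∫ h in ha'..hb,
            fdist r₀ D₂ t (r₁ h) / hCIRderiv a D₁ τ (r₁ h)
              - fdist r₀ D₂ t (r₂ h) / hCIRderiv a D₁ τ (r₂ h) := by
  intro ha' hb hha' hab hbs
  set F : ℝ → ℝ := hCIR a D₁ τ with hF
  set F' : ℝ → ℝ := hCIRderiv a D₁ τ with hF'
  set f : ℝ → ℝ := fdist r₀ D₂ t with hf
  set hstar : ℝ := hCIR a D₁ τ rstar with hhstar
  -- derivative of F at every nonzero point
  have hder : ∀ x : ℝ, x ≠ 0 → HasDerivAt F (F' x) x :=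
    fun x hx => hCIR_hasDerivAt a D₁ τ hD₁ hτ hx
  -- the derivative vanishes at rstar
  have h0 : F' rstar = 0 := by
    have hlocmax : IsLocalMax F rstar := by
      filter_upwards [isOpen_Ioi.mem_nhds (show rstar ∈ Set.Ioi a from hrstar)] with r hr
      by_cases h : r = rstar
      · rw [h]
      · exact (hmax r hr h).le
    exact hlocmax.hasDerivAt_eq_zero (hder rstar (ha.trans hrstar).ne')
  obtain ⟨hdpos, hdneg⟩ := hCIRderiv_sign a D₁ τ rstar ha hD₁ hτ hrstar h0
  -- root locations
  have hroot : ∀ h ∈ Set.Ioo (0:ℝ) hstar,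
      a < r₁ h ∧ r₁ h < rstar ∧ rstar < r₂ h ∧ F (r₁ h) = h ∧ F (r₂ h) = h := by
    intro h hh
    obtain ⟨h1, h2, h3, h4⟩ := hroots h hh
    have hr2 : rstar < r₂ h := by
      by_contra hc
      push_neg at hc
      have := hmono ⟨h1, (h2.trans_le hc).le⟩ ⟨h1.trans h2, hc⟩ h2
      rw [h3, h4] at this
      exact lt_irrefl _ this
    have hr1 : r₁ h < rstar := by
      by_contra hc
      push_neg at hc
      have := hanti hc (hc.trans h2.le) h2
      rw [h3, h4] at this
      exact lt_irrefl _ this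
    exact ⟨h1, hr1, hr2, h3, h4⟩
  -- the sets
  set S : Set ℝ := F ⁻¹' Set.Ioc ha' hb with hSdef
  set S₁ : Set ℝ := Set.Ioc a rstar ∩ S with hS₁def
  set S₂ : Set ℝ := Set.Ioi rstar ∩ S with hS₂def
  have hFm : Measurable F := hCIR_measurable a D₁ τ
  have hfm : Measurable f := fdist_measurable r₀ D₂ t
  have hSm : MeasurableSet S := hFm measurableSet_Ioc
  have hS₁m : MeasurableSet S₁ := measurableSet_Ioc.inter hSm
  have hS₂m : MeasurableSet S₂ := measurableSet_Ioi.inter hSm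
  -- images
  have hmemIoo : ∀ h ∈ Set.Ioc ha' hb, h ∈ Set.Ioo (0:ℝ) hstar :=
    fun h hh => ⟨hha'.trans_lt hh.1, hh.2.trans_lt hbs⟩
  have himg1 : F '' S₁ = Set.Ioc ha' hb := by
    apply Set.Subset.antisymm
    · rintro _ ⟨x, ⟨hx1, hx2⟩, rfl⟩
      exact hx2
    · intro h hh
      obtain ⟨p1, p2, p3, p4, p5⟩ := hroot h (hmemIoo h hh)
      exact ⟨r₁ h, ⟨⟨p1, p2.le⟩, by simpa [hSdef, Set.mem_preimage, p4] using hh⟩, p4⟩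
  have himg2 : F '' S₂ = Set.Ioc ha' hb := by
    apply Set.Subset.antisymm
    · rintro _ ⟨x, ⟨hx1, hx2⟩, rfl⟩
      exact hx2
    · intro h hh
      obtain ⟨p1, p2, p3, p4, p5⟩ := hroot h (hmemIoo h hh)
      exact ⟨r₂ h, ⟨p3, by simpa [hSdef, Set.mem_preimage, p5] using hh⟩, p5⟩
  -- pointwise identities
  set G₁ : ℝ → ℝ := fun h => f (r₁ h) / F' (r₁ h) with hG₁
  set G₂ : ℝ → ℝ := fun h => f (r₂ h) / F' (r₂ h) with hG₂
  have hptw1 : ∀ x ∈ S₁, |F' x| • G₁ (F x) = f x := by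
    rintro x ⟨hx1, hx2⟩
    have hhx := hmemIoo (F x) hx2
    obtain ⟨p1, p2, p3, p4, p5⟩ := hroot (F x) hhx
    have hxlt : x < rstar := by
      rcases lt_or_eq_of_le hx1.2 with h | h
      · exact h
      · exact absurd (h ▸ hhx.2) (lt_irrefl _)
    have heq : r₁ (F x) = x := hmono.injOn ⟨p1, p2.le⟩ hx1 p4
    have hd : 0 < F' x := hdpos x ⟨hx1.1, hxlt⟩
    rw [hG₁]
    simp only
    rw [heq, abs_of_pos hd, smul_eq_mul, mul_comm, div_mul_cancel₀ _ hd.ne']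
  have hptw2 : ∀ x ∈ S₂, |F' x| • G₂ (F x) = -f x := by
    rintro x ⟨hx1, hx2⟩
    have hhx := hmemIoo (F x) hx2
    obtain ⟨p1, p2, p3, p4, p5⟩ := hroot (F x) hhx
    have heq : r₂ (F x) = x := hanti.injOn p3.le (Set.mem_Ioi.mp hx1).le p5
    have hd : F' x < 0 := hdneg x hx1
    rw [hG₂]
    simp only
    rw [heq, abs_of_neg hd, smul_eq_mul, neg_mul, mul_comm, div_mul_cancel₀ _ hd.ne]
  -- total mass of the density is 1
  have htot : ∫⁻ x, ENNReal.ofReal (f x) = 1 := by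
    have h1 : (volume.withDensity fun x => ENNReal.ofReal (f x)) Set.univ = 1 := by
      rw [← hRlaw, Measure.map_apply hRmeas MeasurableSet.univ, Set.preimage_univ,
        measure_univ]
    rwa [withDensity_apply _ MeasurableSet.univ, Measure.restrict_univ] at h1
  have hfin : ∀ s : Set ℝ, ∫⁻ x in s, ENNReal.ofReal (f x) ≠ ⊤ := by
    intro s
    refine ne_top_of_le_ne_top ?_ (setLIntegral_le_lintegral s _)
    rw [htot]
    exact ENNReal.one_ne_top
  have hfnn : ∀ x, 0 ≤ f x := fdist_nonneg r₀ D₂ t hr₀ hD₂ ht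
  have hIntOn : ∀ s : Set ℝ, IntegrableOn f s := by
    intro s
    refine ⟨hfm.aestronglyMeasurable.restrict, ?_⟩
    rw [hasFiniteIntegral_iff_ofReal (ae_of_all _ hfnn)]
    exact (hfin s).lt_top
  -- Bochner integrals versus lintegrals
  have hBoch : ∀ s : Set ℝ, MeasurableSet s →
      (∫⁻ x in s, ENNReal.ofReal (f x)).toReal = ∫ x in s, f x := by
    intro s hs
    rw [integral_eq_lintegral_of_nonneg_ae (ae_of_all _ hfnn)
      hfm.aestronglyMeasurable.restrict]
  -- derivatives within the sets
  have hder1 : ∀ x ∈ S₁, HasDerivWithinAt F (F' x) S₁ x :=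
    fun x hx => (hder x (ha.trans hx.1.1).ne').hasDerivWithinAt
  have hder2 : ∀ x ∈ S₂, HasDerivWithinAt F (F' x) S₂ x :=
    fun x hx => (hder x (ha.trans (hrstar.trans hx.1)).ne').hasDerivWithinAt
  have hinj1 : Set.InjOn F S₁ := hmono.injOn.mono Set.inter_subset_left
  have hinj2 : Set.InjOn F S₂ :=
    hanti.injOn.mono (Set.inter_subset_left.trans Set.Ioi_subset_Ici_self)
  -- change of variables
  have hcov1 : ∫ h in Set.Ioc ha' hb, G₁ h = ∫ x in S₁, f x := by
    rw [← himg1, integral_image_eq_integral_abs_deriv_smul hS₁m hder1 hinj1 G₁]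
    exact setIntegral_congr_fun hS₁m hptw1
  have hcov2 : ∫ h in Set.Ioc ha' hb, G₂ h = -∫ x in S₂, f x := by
    rw [← himg2, integral_image_eq_integral_abs_deriv_smul hS₂m hder2 hinj2 G₂,
      ← integral_neg]
    exact setIntegral_congr_fun hS₂m hptw2
  -- integrability of G₁, G₂ on the interval
  have hIG1 : IntegrableOn G₁ (Set.Ioc ha' hb) := by
    rw [← himg1, integrableOn_image_iff_integrableOn_abs_deriv_smul hS₁m hder1 hinj1 G₁]
    exact (hIntOn S₁).congr_fun (fun x hx => (hptw1 x hx).symm) hS₁m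
  have hIG2 : IntegrableOn G₂ (Set.Ioc ha' hb) := by
    rw [← himg2, integrableOn_image_iff_integrableOn_abs_deriv_smul hS₂m hder2 hinj2 G₂]
    exact IntegrableOn.congr_fun (hIntOn S₂).neg
      (fun x hx => by simpa using (hptw2 x hx).symm) hS₂m
  -- LHS
  have hsetEq : {ω | ha' < F (R ω) ∧ F (R ω) ≤ hb} = R ⁻¹' S := by
    ext ω
    simp [hSdef, Set.mem_preimage, Set.mem_Ioc]
  have hSsplit : S = (S ∩ Set.Iic a) ∪ (S₁ ∪ S₂) := by
    apply Set.Subset.antisymm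
    · intro x hx
      rcases le_or_gt x a with h | h
      · exact Or.inl ⟨hx, h⟩
      · rcases le_or_gt x rstar with h' | h'
        · exact Or.inr (Or.inl ⟨⟨h, h'⟩, hx⟩)
        · exact Or.inr (Or.inr ⟨h', hx⟩)
    · rintro x (⟨hx, _⟩ | ⟨_, hx⟩ | ⟨_, hx⟩) <;> exact hx
  have hzero : ∫⁻ x in S ∩ Set.Iic a, ENNReal.ofReal (f x) = 0 := by
    rw [setLIntegral_congr_fun (hSm.inter measurableSet_Iic)
      (fun x hx => ?_), lintegral_zero]
    show ENNReal.ofReal (f x) = 0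
    have hx0 : ¬ (0 < x) := by
      intro h
      have := hCIR_nonpos a D₁ τ ha h hx.2
      have h2 : ha' < F x := hx.1.1
      rw [hF] at h2
      linarith
    rw [hf]
    unfold fdist
    rw [if_neg hx0, ENNReal.ofReal_zero]
  have hdisj0 : Disjoint (S ∩ Set.Iic a) (S₁ ∪ S₂) := by
    rw [Set.disjoint_left]
    rintro x ⟨_, hx⟩ (⟨h, _⟩ | ⟨h, _⟩)
    · exact absurd hx (not_le.mpr h.1)
    · exact absurd hx (not_le.mpr (hrstar.trans h))
  have hdisj12 : Disjoint S₁ S₂ := by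
    rw [Set.disjoint_left]
    rintro x ⟨h, _⟩ ⟨h', _⟩
    exact absurd h.2 (not_le.mpr h')
  have hLHS : (P {ω | ha' < F (R ω) ∧ F (R ω) ≤ hb}).toReal
      = (∫ x in S₁, f x) + ∫ x in S₂, f x := by
    rw [hsetEq, ← Measure.map_apply hRmeas hSm, hRlaw, withDensity_apply _ hSm, hSsplit,
      lintegral_union (hS₁m.union hS₂m) hdisj0, hzero, zero_add,
      lintegral_union hS₂m hdisj12, ENNReal.toReal_add (hfin S₁) (hfin S₂),
      hBoch S₁ hS₁m, hBoch S₂ hS₂m]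
  rw [hLHS, intervalIntegral.integral_of_le hab.le]
  rw [show (fun h => f (r₁ h) / F' (r₁ h) - f (r₂ h) / F' (r₂ h)) = fun h => G₁ h - G₂ h
    from rfl]
  rw [integral_sub hIG1 hIG2, hcov1, hcov2]
  ring
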